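/- Let m ≥ 3 and let u_k = (cos(2πk/m), sin(2πk/m)) ∈ ℝ² for k = 0, 1, …, m−1 be the radius vectors of the vertices of a regular m-gon centered at the origin. Then for every odd r with 0 < r < m and every ξ ∈ ℝ², the elementary symmetric polynomial e_r applied to the tuple (⟨u_0, ξ⟩, ⟨u_1, ξ⟩, …, ⟨u_{m-1}, ξ⟩) equals 0. -/

import Mathlib

open Finset Complex

/-- If `ζ^m = 1` and `ζ ≠ 1` then the geometric sum vanishes. -/
lemma geom_sum_zero_of_pow_eq_one {ζ : ℂ} (m : ℕ) (h1 : ζ ^ m = 1) (h2 : ζ ≠ 1) :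
    ∑ k ∈ range m, ζ ^ k = 0 := by
  rw [geom_sum_eq h2, h1, sub_self, zero_div]

lemma omega_zpow_ne_one (m : ℕ) (hm : 0 < m) (s : ℤ) (hs : s ≠ 0) (habs : |s| < m) :
    Complex.exp ((2 * Real.pi / m : ℝ) * I) ^ s ≠ 1 := by
  intro h
  rw [← Complex.exp_int_mul] at h
  rw [Complex.exp_eq_one_iff] at h
  obtain ⟨n, hn⟩ := h
  have hm0 : (m : ℂ) ≠ 0 := Nat.cast_ne_zero.mpr hm.ne'
  have hpi : (Real.pi : ℂ) ≠ 0 := Complex.ofReal_ne_zero.mpr Real.pi_ne_zero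
  have hI : (I : ℂ) ≠ 0 := Complex.I_ne_zero
  have hsc : (s : ℂ) = n * m := by
    have h2 : (s : ℂ) * ((2 * Real.pi / m : ℝ) * I) * m = n * (2 * Real.pi * I) * m := by
      rw [hn]
    field_simp at h2
    have h3 : (s : ℂ) * (2 * Real.pi * I) = (n * m) * (2 * Real.pi * I) := by
      push_cast at h2 ⊢
      ring_nf at h2 ⊢
      have hc : ((2 * Real.pi / m : ℝ) : ℂ) * m = 2 * Real.pi := by
        push_cast
        field_simp
      linear_combination (m : ℂ) * hn - (s : ℂ) * I * hc
    exact mul_right_cancel₀ (by simp [hpi, hI]) h3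
  have hsz : s = n * m := by exact_mod_cast hsc
  rcases eq_or_ne n 0 with rfl | hn0
  · simp at hsz; omega
  · have : (m : ℤ) ≤ |s| := by
      rw [hsz, abs_mul, abs_of_nonneg (by positivity : (0:ℤ) ≤ (m:ℤ))]
      nlinarith [Int.one_le_abs hn0]
    omega

/-- Power sums of the dot products vanish in odd degree `0 < j < m`. -/
lemma psum_polygon_zero (m : ℕ) (hm : 0 < m) (x y : ℝ) (j : ℕ) (hodd : Odd j)
    (hjm : j < m) :
    ∑ k : Fin m, (Real.cos (2 * Real.pi * (k : ℕ) / m) * x +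
        Real.sin (2 * Real.pi * (k : ℕ) / m) * y) ^ j = 0 := by
  obtain ⟨ω, hω⟩ : ∃ ω : ℂ, ω = Complex.exp ((2 * Real.pi / m : ℝ) * I) := ⟨_, rfl⟩
  have hωm : ω ^ m = 1 := by
    rw [hω, ← Complex.exp_nat_mul]
    rw [show (m : ℂ) * ((2 * Real.pi / m : ℝ) * I) = 2 * Real.pi * I by
      have hm0c : (m : ℂ) ≠ 0 := Nat.cast_ne_zero.mpr hm.ne'
      push_cast
      field_simp]
    exact Complex.exp_two_pi_mul_I
  have hωabs : ‖ω‖ = 1 := by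
    rw [hω]; exact Complex.norm_exp_ofReal_mul_I _
  have hωne : ω ≠ 0 := by
    intro h; rw [h] at hωabs; simp at hωabs
  obtain ⟨c, hc⟩ : ∃ c : ℂ, c = (starRingEnd ℂ) ω := ⟨_, rfl⟩
  have hcinv : c = ω⁻¹ := by rw [hc]; exact (Complex.inv_eq_conj hωabs).symm
  obtain ⟨w, hw⟩ : ∃ w : ℂ, w = (x : ℂ) + y * I := ⟨_, rfl⟩
  -- pointwise description
  have key : ∀ k : Fin m,
      ((Real.cos (2 * Real.pi * (k : ℕ) / m) : ℂ) * x +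
        (Real.sin (2 * Real.pi * (k : ℕ) / m) : ℂ) * y)
      = (c ^ (k : ℕ) * w + ω ^ (k : ℕ) * (starRingEnd ℂ) w) / 2 := by
    intro k
    have hpow : ω ^ (k : ℕ) = Complex.exp ((2 * Real.pi * (k : ℕ) / m : ℝ) * I) := by
      rw [hω, ← Complex.exp_nat_mul]
      congr 1
      push_cast
      have hm0 : (m : ℂ) ≠ 0 := Nat.cast_ne_zero.mpr hm.ne'
      field_simp
    set θ : ℝ := 2 * Real.pi * (k : ℕ) / m
    have h1 : ω ^ (k : ℕ) = (Real.cos θ : ℂ) + (Real.sin θ : ℂ) * I := by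
      rw [hpow, Complex.exp_mul_I]
      simp [Complex.ofReal_cos, Complex.ofReal_sin]
    have h2 : c ^ (k : ℕ) = (Real.cos θ : ℂ) - (Real.sin θ : ℂ) * I := by
      rw [hc, ← map_pow, h1, map_add, map_mul, Complex.conj_ofReal,
        Complex.conj_ofReal, Complex.conj_I]
      ring
    have hwc : (starRingEnd ℂ) w = (x : ℂ) - (y : ℂ) * I := by
      rw [hw, map_add, map_mul, Complex.conj_ofReal, Complex.conj_ofReal, Complex.conj_I]
      ring
    rw [h1, h2, hwc, hw]
    have hI2 : (I : ℂ) ^ 2 = -1 := Complex.I_sq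
    linear_combination ((Real.sin θ : ℂ) * y) * hI2
  -- reduce to complex
  have hcx : ((∑ k : Fin m, (Real.cos (2 * Real.pi * (k : ℕ) / m) * x +
      Real.sin (2 * Real.pi * (k : ℕ) / m) * y) ^ j : ℝ) : ℂ) = 0 := by
    simp only [Complex.ofReal_sum, Complex.ofReal_pow, Complex.ofReal_add,
      Complex.ofReal_mul]
    calc ∑ k : Fin m, ((Real.cos (2 * Real.pi * (k : ℕ) / m) : ℂ) * x +
            (Real.sin (2 * Real.pi * (k : ℕ) / m) : ℂ) * y) ^ j
        = ∑ k : Fin m, ((c ^ (k : ℕ) * w + ω ^ (k : ℕ) * (starRingEnd ℂ) w) / 2) ^ j := by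
          exact Finset.sum_congr rfl fun k _ => by rw [key k]
      _ = ∑ k : Fin m, ∑ t ∈ range (j + 1),
            (w ^ t * ((starRingEnd ℂ) w) ^ (j - t) * (Nat.choose j t : ℂ) / 2 ^ j) *
              (c ^ t * ω ^ (j - t)) ^ (k : ℕ) := by
          refine Finset.sum_congr rfl fun k _ => ?_
          rw [div_pow, add_pow, Finset.sum_div]
          refine Finset.sum_congr rfl fun t ht => ?_
          ring
      _ = ∑ t ∈ range (j + 1),
            (w ^ t * ((starRingEnd ℂ) w) ^ (j - t) * (Nat.choose j t : ℂ) / 2 ^ j) *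
              ∑ k : Fin m, (c ^ t * ω ^ (j - t)) ^ (k : ℕ) := by
          rw [Finset.sum_comm]
          exact Finset.sum_congr rfl fun t _ => by rw [Finset.mul_sum]
      _ = 0 := by
          refine Finset.sum_eq_zero fun t ht => ?_
          have htj : t ≤ j := Nat.lt_succ_iff.mp (Finset.mem_range.mp ht)
          have hzeta : c ^ t * ω ^ (j - t) = ω ^ ((j : ℤ) - 2 * t) := by
            rw [hcinv, inv_pow, ← zpow_natCast ω t, ← zpow_natCast ω (j - t),
              ← zpow_neg, ← zpow_add₀ hωne]
            congr 1
            omega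
          have hs0 : (j : ℤ) - 2 * t ≠ 0 := by
            rcases hodd with ⟨u, hu⟩; omega
          have habs : |(j : ℤ) - 2 * t| < m := by
            rw [abs_lt]; omega
          have hne1 : c ^ t * ω ^ (j - t) ≠ 1 := by
            rw [hzeta, hω]
            exact omega_zpow_ne_one m hm _ hs0 habs
          have hpm : (c ^ t * ω ^ (j - t)) ^ m = 1 := by
            rw [mul_pow, ← pow_mul, ← pow_mul, mul_comm t m, mul_comm (j - t) m,
              pow_mul, pow_mul, hωm, hcinv, inv_pow, hωm]
            simp
          rw [Fin.sum_univ_eq_sum_range (fun k => (c ^ t * ω ^ (j - t)) ^ k) m,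
            geom_sum_zero_of_pow_eq_one m hpm hne1, mul_zero]
  exact_mod_cast hcx

/-- for the vertices `u_k = (cos(2πk/m), sin(2πk/m))` of a regular
`m`-gon centered at the origin, every odd-degree elementary symmetric polynomial
(of degree `0 < r < m`) of the dot products `⟨u_k, ξ⟩` vanishes identically. -/
theorem esymm_odd_regular_polygon_eq_zero (m : ℕ) (hm : 3 ≤ m)
    (r : ℕ) (hodd : Odd r) (h0 : 0 < r) (hrm : r < m) (ξ : ℝ × ℝ) :
    ∑ S ∈ (Finset.univ : Finset (Fin m)).powersetCard r,
      ∏ k ∈ S,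
        (Real.cos (2 * Real.pi * (k : ℕ) / m) * ξ.1 +
          Real.sin (2 * Real.pi * (k : ℕ) / m) * ξ.2) = 0 := by
  have hm0 : 0 < m := by omega
  set a : Fin m → ℝ := fun k =>
    Real.cos (2 * Real.pi * (k : ℕ) / m) * ξ.1 +
      Real.sin (2 * Real.pi * (k : ℕ) / m) * ξ.2 with ha
  have hEA : ∀ i : ℕ, (MvPolynomial.aeval a) (MvPolynomial.esymm (Fin m) ℝ i)
      = ∑ S ∈ (Finset.univ : Finset (Fin m)).powersetCard i, ∏ k ∈ S, a k := by
    intro i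
    simp [MvPolynomial.esymm, map_sum]
  have hPA : ∀ i : ℕ, (MvPolynomial.aeval a) (MvPolynomial.psum (Fin m) ℝ i)
      = ∑ k : Fin m, a k ^ i := by
    intro i
    simp [MvPolynomial.psum]
  have main : ∀ r : ℕ, Odd r → r < m →
      (∑ S ∈ (Finset.univ : Finset (Fin m)).powersetCard r, ∏ k ∈ S, a k) = 0 := by
    intro r
    induction r using Nat.strong_induction_on with
    | _ r ih =>
      intro hodd hrm
      have hr0 : 0 < r := hodd.pos
      have hN := congrArg (MvPolynomial.aeval a)
        (MvPolynomial.mul_esymm_eq_sum (Fin m) ℝ r)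
      simp only [map_mul, map_natCast, map_sum, map_pow, map_neg, map_one] at hN
      rw [hEA] at hN
      have hzero : ∑ p ∈ Finset.filter (fun p => p.1 < r) (Finset.HasAntidiagonal.antidiagonal r),
          (-1 : ℝ) ^ p.1 * (MvPolynomial.aeval a) (MvPolynomial.esymm (Fin m) ℝ p.1) *
            (MvPolynomial.aeval a) (MvPolynomial.psum (Fin m) ℝ p.2) = 0 := by
        refine Finset.sum_eq_zero fun p hp => ?_
        rw [Finset.mem_filter, Finset.HasAntidiagonal.mem_antidiagonal] at hp
        obtain ⟨hsum, hlt⟩ := hp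
        rcases Nat.even_or_odd p.2 with he | ho
        · -- p.2 even, so p.1 odd and < r
          have hp1odd : Odd p.1 := by
            rw [Nat.odd_iff] at hodd ⊢
            rw [Nat.even_iff] at he
            omega
          rw [hEA, ih p.1 hlt hp1odd (by omega), mul_zero, zero_mul]
        · -- p.2 odd
          rw [hPA]
          have : ∑ k : Fin m, a k ^ p.2 = 0 :=
            psum_polygon_zero m hm0 ξ.1 ξ.2 p.2 ho (by omega)
          rw [this, mul_zero]
      rw [hzero, mul_zero] at hN
      have : (r : ℝ) ≠ 0 := Nat.cast_ne_zero.mpr hr0.ne'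
      exact (mul_eq_zero.mp hN).resolve_left this
  exact main r hodd hrm
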